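/- Assume Conjecture 1: there exists N such that for every n ≥ N and every positive integer m, if m+1, ..., m+n are all composite then ∏_{i=1}^n (m+i) = n! · ∏_{i=1}^n a_i for some positive integers a_1, ..., a_n with a_i dividing m+i, a_i > 1 for each i, and gcd(a_i, a_j) = 1 for all i ≠ j. Then there exists N' such that for every n ≥ N' and every divisor d > 1 of ∏_{n < p < 2n, p prime} p, if q denotes the least prime factor of d, then there is a prime in the open interval (d − q, d + q). -/

import Mathlib

/-- **Conjecture 1.** For all sufficiently large `n`, the product of any `n`
consecutive composite numbers `m+1, ..., m+n` can be written as
`n! · a_1 ⋯ a_n` with `a_i ∣ m+i`, `a_i > 1`, and the `a_i` pairwise coprime. -/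
def Conjecture1 : Prop :=
  ∃ N : ℕ, ∀ n : ℕ, N ≤ n → ∀ m : ℕ, 0 < m →
    (∀ i ∈ Finset.Icc 1 n, 1 < m + i ∧ ¬ (m + i).Prime) →
    ∃ a : ℕ → ℕ,
      (∏ i ∈ Finset.Icc 1 n, (m + i)) =
        Nat.factorial n * ∏ i ∈ Finset.Icc 1 n, a i ∧
      (∀ i ∈ Finset.Icc 1 n, a i ∣ (m + i) ∧ 1 < a i) ∧
      (∀ i ∈ Finset.Icc 1 n, ∀ j ∈ Finset.Icc 1 n, i ≠ j →
        Nat.Coprime (a i) (a j))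

/-- Assuming Conjecture 1, for all sufficiently large `n`, every divisor `d > 1`
of `∏_{n < p < 2n} p` has a prime in the open interval `(d − q, d + q)`, where
`q` is the least prime factor of `d`. -/
theorem exists_prime_near_divisor_minFac_of_conjecture1 (hC : Conjecture1) :
    ∃ N' : ℕ, ∀ n : ℕ, N' ≤ n → ∀ d : ℕ, 1 < d →
      d ∣ (∏ p ∈ Finset.filter Nat.Prime (Finset.Ioo n (2 * n)), p) →
      ∃ p : ℕ, p.Prime ∧ d - d.minFac < p ∧ p < d + d.minFac := by
  obtain ⟨N, hN⟩ := hC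
  refine ⟨N + 1, fun n hn d hd hdvd => ?_⟩
  set S : Finset ℕ := Finset.filter Nat.Prime (Finset.Ioo n (2 * n)) with hS
  -- any prime dividing d lies in S
  have hmem : ∀ r : ℕ, r.Prime → r ∣ d → r ∈ S := by
    intro r hr hrd
    have : r ∣ ∏ p ∈ S, p := hrd.trans hdvd
    obtain ⟨p, hpS, hrp⟩ := (Prime.dvd_finset_prod_iff hr.prime _).mp this
    have hp : p.Prime := (Finset.mem_filter.mp hpS).2
    rwa [(Nat.prime_dvd_prime_iff_eq hr hp).mp hrp]
  have hq : d.minFac.Prime := Nat.minFac_prime (by omega)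
  set q := d.minFac with hqdef
  have hqd : q ∣ d := Nat.minFac_dvd d
  have hqS : q ∈ S := hmem q hq hqd
  have hqn : n < q ∧ q < 2 * n := by
    have := Finset.mem_filter.mp hqS
    exact Finset.mem_Ioo.mp this.1
  have hq2 : 2 ≤ q := hq.two_le
  have hqled : q ≤ d := Nat.minFac_le (by omega)
  by_cases hdp : d.Prime
  · exact ⟨d, hdp, by omega, by omega⟩
  by_contra hcon
  push_neg at hcon
  -- d is composite, so d > q
  have hdq : q < d := by
    rcases lt_or_eq_of_le hqled with h | h
    · exact h
    · exact absurd (h ▸ hq) hdp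
  set m := d - q with hm
  have hm0 : 0 < m := by omega
  have hmd : m + q = d := by omega
  set n' := 2 * q - 1 with hn'
  have hn'N : N ≤ n' := by omega
  have hcomp : ∀ i ∈ Finset.Icc 1 n', 1 < m + i ∧ ¬ (m + i).Prime := by
    intro i hi
    rw [Finset.mem_Icc] at hi
    refine ⟨by omega, fun hp => ?_⟩
    have h1 : d - d.minFac < m + i := by omega
    have h2 := hcon (m + i) hp h1
    omega
  obtain ⟨a, ha_eq, ha_div, _⟩ := hN n' hn'N m hm0 hcomp
  have hqIcc : q ∈ Finset.Icc 1 n' := Finset.mem_Icc.mpr ⟨by omega, by omega⟩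
  obtain ⟨haq_dvd, haq_gt⟩ := ha_div q hqIcc
  have haqd : a q ∣ d := hmd ▸ haq_dvd
  -- least prime factor r of a q
  have hr : (a q).minFac.Prime := Nat.minFac_prime (by omega)
  set r := (a q).minFac with hrdef
  have hraq : r ∣ a q := Nat.minFac_dvd _
  have hrd : r ∣ d := hraq.trans haqd
  have hrS : r ∈ S := hmem r hr hrd
  have hrn : n < r ∧ r < 2 * n := by
    have := Finset.mem_filter.mp hrS
    exact Finset.mem_Ioo.mp this.1
  have hqr : q ≤ r := Nat.minFac_le_of_dvd hr.two_le hrd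
  have hrn' : r ≤ n' := by omega
  -- r*r divides the product of the m+i
  have hfac : r ∣ Nat.factorial n' := Nat.dvd_factorial hr.pos hrn'
  have hprodA : r ∣ ∏ i ∈ Finset.Icc 1 n', a i :=
    hraq.trans (Finset.dvd_prod_of_mem a hqIcc)
  have hrr : r * r ∣ ∏ i ∈ Finset.Icc 1 n', (m + i) := by
    rw [ha_eq]; exact mul_dvd_mul hfac hprodA
  rw [← Finset.mul_prod_erase _ _ hqIcc] at hrr
  -- r is coprime to the rest of the product
  have hcopR : Nat.Coprime r (∏ i ∈ (Finset.Icc 1 n').erase q, (m + i)) := by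
    rw [Nat.Prime.coprime_iff_not_dvd hr]
    intro hdvdR
    obtain ⟨i, hiE, hri⟩ := (Prime.dvd_finset_prod_iff hr.prime _).mp hdvdR
    have hiq : i ≠ q := (Finset.mem_erase.mp hiE).1
    have hiIcc := Finset.mem_Icc.mp (Finset.mem_erase.mp hiE).2
    have hrmq : r ∣ m + q := hmd ▸ hrd
    rcases lt_or_gt_of_ne hiq with h | h
    · have : r ∣ (m + q) - (m + i) := Nat.dvd_sub hrmq hri
      have hle := Nat.le_of_dvd (by omega) this
      omega
    · have : r ∣ (m + i) - (m + q) := Nat.dvd_sub hri hrmq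
      have hle := Nat.le_of_dvd (by omega) this
      omega
  have hrrd : r * r ∣ d := by
    have := (Nat.Coprime.mul hcopR hcopR).dvd_of_dvd_mul_right hrr
    rwa [hmd] at this
  -- but the product of primes in S is squarefree
  have hrrP : r * r ∣ ∏ p ∈ S, p := hrrd.trans hdvd
  rw [← Finset.mul_prod_erase _ _ hrS] at hrrP
  have hrrest : r ∣ ∏ p ∈ S.erase r, p :=
    (mul_dvd_mul_iff_left (by omega : r ≠ 0)).mp hrrP
  obtain ⟨p, hpE, hrp⟩ := (Prime.dvd_finset_prod_iff hr.prime _).mp hrrest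
  have hp : p.Prime := (Finset.mem_filter.mp (Finset.mem_of_mem_erase hpE)).2
  have : r = p := (Nat.prime_dvd_prime_iff_eq hr hp).mp hrp
  exact (Finset.mem_erase.mp hpE).1 this.symm
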